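/- Let X be a real normed (or locally convex) space and f₁, …, f_n : X → ℝ ∪ {+∞} be proper convex functions whose pointwise maximum f := max_{1≤k≤n} f_k has nonempty effective domain. Then inf_{x∈X} f(x) = max_{λ∈Δ_n} inf_{x∈X} Σ_{k=1}^n λ_k f_k(x), where Δ_n = {λ ∈ ℝⁿ : λ_k ≥ 0, Σ λ_k = 1} is the standard simplex and the maximum over Δ_n is attained. -/

import Mathlib

open Filter Topology

def IsConvexEFn {E : Type*} [AddCommGroup E] [Module ℝ E] (g : E → EReal) : Prop :=
  Convex ℝ {p : E × ℝ | g p.1 ≤ (p.2 : EReal)}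

/-- Scalar multiplication with the conventions `0·(+∞) = +∞` and `0·(−∞) = 0`. -/
noncomputable def smul0 (a : ℝ) (v : EReal) : EReal :=
  if a = 0 then (if v = ⊤ then ⊤ else 0) else (a : EReal) * v

lemma smul0_coe (a r : ℝ) : smul0 a (r : EReal) = ((a * r : ℝ) : EReal) := by
  unfold smul0
  rcases eq_or_ne a 0 with h | h
  · simp [h]
  · simp [h, EReal.coe_mul]

lemma smul0_top (a : ℝ) (ha : 0 ≤ a) : smul0 a ⊤ = ⊤ := by
  unfold smul0
  rcases eq_or_ne a 0 with h | h
  · simp [h]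
  · simp [h, EReal.coe_mul_top_of_pos (lt_of_le_of_ne ha (Ne.symm h))]

lemma smul0_ne_bot (a : ℝ) (ha : 0 ≤ a) (v : EReal) (hv : v ≠ ⊥) : smul0 a v ≠ ⊥ := by
  induction v with
  | bot => exact absurd rfl hv
  | coe r => rw [smul0_coe]; exact EReal.coe_ne_bot _
  | top => rw [smul0_top a ha]; simp

lemma ereal_sum_ne_bot {ι : Type*} (s : Finset ι) (g : ι → EReal)
    (hnb : ∀ i ∈ s, g i ≠ ⊥) : ∑ i ∈ s, g i ≠ ⊥ := by
  classical
  induction s using Finset.induction with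
  | empty => simp
  | @insert a t ha ih =>
    rw [Finset.sum_insert ha, Ne, EReal.add_eq_bot_iff]
    push_neg
    exact ⟨hnb a (Finset.mem_insert_self a t),
      ih fun i hi => hnb i (Finset.mem_insert_of_mem hi)⟩

lemma ereal_sum_eq_top {ι : Type*} (s : Finset ι) (g : ι → EReal)
    (hnb : ∀ i ∈ s, g i ≠ ⊥) (k : ι) (hk : k ∈ s) (hkt : g k = ⊤) :
    ∑ i ∈ s, g i = ⊤ := by
  classical
  rw [← Finset.add_sum_erase s g hk, hkt]
  exact EReal.top_add_of_ne_bot (ereal_sum_ne_bot _ _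
    fun i hi => hnb i (Finset.mem_of_mem_erase hi))

lemma ereal_coe_sum {ι : Type*} (s : Finset ι) (g : ι → ℝ) :
    ((∑ i ∈ s, g i : ℝ) : EReal) = ∑ i ∈ s, (g i : EReal) := by
  classical
  induction s using Finset.induction with
  | empty => simp
  | @insert a t ha ih => rw [Finset.sum_insert ha, Finset.sum_insert ha, EReal.coe_add, ih]

lemma weak_pointwise {n : ℕ} (hn : 0 < n) (v : Fin n → EReal)
    (hnb : ∀ k, v k ≠ ⊥) (m : Fin n → ℝ) (hm : ∀ k, 0 ≤ m k) (hms : ∑ k, m k = 1) :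
    ∑ k, smul0 (m k) (v k) ≤ ⨆ k, v k := by
  set S := ⨆ k, v k with hS
  rcases eq_or_ne S ⊤ with hT | hT
  · rw [hT]; exact le_top
  have hSb : S ≠ ⊥ := by
    intro h
    exact hnb ⟨0, hn⟩ (le_bot_iff.mp (h ▸ le_iSup v ⟨0, hn⟩))
  lift S to ℝ using ⟨hT, hSb⟩ with s hs
  have hvr : ∀ k, ∃ r : ℝ, v k = (r : EReal) ∧ r ≤ s := by
    intro k
    have hle : v k ≤ (s : EReal) := hs ▸ le_iSup v k
    have hkt : v k ≠ ⊤ := fun h => by simp [h] at hle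
    refine ⟨(v k).toReal, (EReal.coe_toReal hkt (hnb k)).symm, ?_⟩
    rwa [← EReal.coe_le_coe_iff, EReal.coe_toReal hkt (hnb k)]
  choose r hr hrs using hvr
  calc ∑ k, smul0 (m k) (v k) = ∑ k, ((m k * r k : ℝ) : EReal) := by
        refine Finset.sum_congr rfl fun k _ => ?_
        rw [hr k, smul0_coe]
    _ = ((∑ k, m k * r k : ℝ) : EReal) := (ereal_coe_sum _ _).symm
    _ ≤ ((s : ℝ) : EReal) := by
        apply EReal.coe_le_coe_iff.mpr
        calc ∑ k, m k * r k ≤ ∑ k, m k * s :=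
              Finset.sum_le_sum fun k _ => mul_le_mul_of_nonneg_left (hrs k) (hm k)
          _ = s := by rw [← Finset.sum_mul, hms, one_mul]

/-- Lagrangian duality for a finite max of proper convex functions:
`inf max_k f_k = max_{λ ∈ Δ_n} inf Σ λ_k f_k`, the max over the simplex attained. -/
theorem stmt7 {X : Type*} [NormedAddCommGroup X] [NormedSpace ℝ X]
    (n : ℕ) (hn : 0 < n) (f : Fin n → X → EReal)
    (hnb : ∀ k x, f k x ≠ ⊥) (hpr : ∀ k, ∃ x, f k x ≠ ⊤)
    (hconv : ∀ k, IsConvexEFn (f k))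
    (hdom : ∃ x, (⨆ k, f k x) ≠ ⊤) :
    ∃ l : Fin n → ℝ, (∀ k, 0 ≤ l k) ∧ (∑ k, l k = 1) ∧
      (⨅ x, ∑ k, smul0 (l k) (f k x)) = (⨅ x, ⨆ k, f k x) ∧
      ∀ m : Fin n → ℝ, (∀ k, 0 ≤ m k) → (∑ k, m k = 1) →
        (⨅ x, ∑ k, smul0 (m k) (f k x)) ≤ ⨅ x, ⨆ k, f k x := by
  classical
  have hne : Nonempty (Fin n) := ⟨⟨0, hn⟩⟩
  obtain ⟨x₀, hx₀⟩ := hdom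
  have hx₀k : ∀ k, f k x₀ ≠ ⊤ := fun k h => hx₀ (top_le_iff.mp (h ▸ le_iSup (f · x₀) k))
  have weak : ∀ m : Fin n → ℝ, (∀ k, 0 ≤ m k) → (∑ k, m k = 1) →
      (⨅ x, ∑ k, smul0 (m k) (f k x)) ≤ ⨅ x, ⨆ k, f k x :=
    fun m hm hms => iInf_mono fun x =>
      weak_pointwise hn (fun k => f k x) (fun k => hnb k x) m hm hms
  set M := ⨅ x, ⨆ k, f k x with hM
  rcases eq_or_ne M ⊥ with hMb | hMb
  · refine ⟨fun k => if k = ⟨0, hn⟩ then 1 else 0, fun k => ?_, by simp, ?_, weak⟩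
    · by_cases h : k = ⟨0, hn⟩ <;> simp [h]
    · refine le_bot_iff.mp ?_ |>.trans hMb.symm
      exact (weak _ (fun k => by by_cases h : k = ⟨0, hn⟩ <;> simp [h]) (by simp)).trans_eq hMb
  have hMt : M ≠ ⊤ := fun h => hx₀ (top_le_iff.mp (h ▸ iInf_le (fun x => ⨆ k, f k x) x₀))
  set μ : ℝ := M.toReal with hμdef
  have hMμ : M = (μ : EReal) := (EReal.coe_toReal hMt hMb).symm
  -- The two convex sets in ℝⁿ
  set C : Set (Fin n → ℝ) := {y | ∃ x, ∀ k, f k x ≤ ((y k : ℝ) : EReal)} with hCdef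
  set D : Set (Fin n → ℝ) := {y | ∀ k, y k < μ} with hDdef
  have hCconv : Convex ℝ C := by
    rintro y ⟨x, hx⟩ y' ⟨x', hx'⟩ t1 t2 ht1 ht2 hts
    refine ⟨t1 • x + t2 • x', fun k => ?_⟩
    have hmem := hconv k (show ((x, y k) : X × ℝ) ∈ _ from hx k)
      (show ((x', y' k) : X × ℝ) ∈ _ from hx' k) ht1 ht2 hts
    simpa [Prod.smul_mk, smul_eq_mul] using hmem
  have hDconv : Convex ℝ D := by
    have : D = ⋂ k, (LinearMap.proj k : (Fin n → ℝ) →ₗ[ℝ] ℝ) ⁻¹' Set.Iio μ := by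
      ext y; simp [hDdef]
    rw [this]
    exact convex_iInter fun k => (convex_Iio μ).linear_preimage _
  have hDopen : IsOpen D := by
    have : D = ⋂ k, (fun y : Fin n → ℝ => y k) ⁻¹' Set.Iio μ := by
      ext y; simp [hDdef]
    rw [this]
    exact isOpen_iInter_of_finite fun k => (isOpen_Iio).preimage (continuous_apply k)
  have hdisj : Disjoint D C := by
    rw [Set.disjoint_left]
    rintro y hyD ⟨x, hx⟩
    set c : ℝ := Finset.univ.sup' Finset.univ_nonempty y with hc
    have hcμ : c < μ := (Finset.sup'_lt_iff _).mpr fun k _ => hyD k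
    have hsup : (⨆ k, f k x) ≤ ((c : ℝ) : EReal) :=
      iSup_le fun k => (hx k).trans (EReal.coe_le_coe_iff.mpr (Finset.le_sup' y (Finset.mem_univ k)))
    have : M < M := by
      calc M ≤ ⨆ k, f k x := iInf_le _ x
        _ ≤ ((c : ℝ) : EReal) := hsup
        _ < ((μ : ℝ) : EReal) := EReal.coe_lt_coe_iff.mpr hcμ
        _ = M := hMμ.symm
    exact lt_irrefl _ this
  obtain ⟨φ, u, hφD, hφC⟩ := geometric_hahn_banach_open hDconv hDopen hCconv hdisj
  set a : Fin n → ℝ := fun k => φ (Pi.single (M := fun _ : Fin n => ℝ) k 1) with hadef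
  have hφ_eval : ∀ y : Fin n → ℝ, φ y = ∑ k, y k * a k := by
    intro y
    have hy : y = ∑ k, y k • Pi.single (M := fun _ : Fin n => ℝ) k 1 := by
      funext j
      simp [Pi.single_apply, Finset.sum_apply, mul_ite]
    conv_lhs => rw [hy]
    rw [map_sum]
    exact Finset.sum_congr rfl fun k _ => by rw [map_smul, smul_eq_mul]
  -- C is nonempty via x₀
  have hy₀C : (fun k => (f k x₀).toReal) ∈ C := by
    refine ⟨x₀, fun k => ?_⟩
    rw [EReal.coe_toReal (hx₀k k) (hnb k x₀)]
  -- constant vectors slightly below μ are in D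
  have hconstD : ∀ c : ℝ, c < μ → (fun _ : Fin n => c) ∈ D := fun c hc k => hc
  have hanneg : ∀ k, 0 ≤ a k := by
    intro k
    by_contra h
    push_neg at h
    set d : Fin n → ℝ := fun _ => μ - 1 with hd
    set t : ℝ := (u - φ d) / (-a k) with ht
    have hφd : φ d < u := hφD d (hconstD _ (by linarith))
    have htpos : 0 ≤ t := div_nonneg (by linarith) (by linarith)
    have hmem : d - t • Pi.single (M := fun _ : Fin n => ℝ) k 1 ∈ D := by
      intro j
      simp only [hd, Pi.sub_apply, Pi.smul_apply, smul_eq_mul, Pi.single_apply]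
      split <;> nlinarith
    have h2 := hφD _ hmem
    rw [map_sub, map_smul, smul_eq_mul] at h2
    have h2' : φ d - t * a k < u := h2
    have hta : t * a k = -(u - φ d) := by
      rw [ht, div_mul_eq_mul_div, div_eq_iff (by linarith : -a k ≠ 0)]
      ring
    rw [hta] at h2'
    linarith
  set s : ℝ := ∑ k, a k with hs
  have hspos : 0 < s := by
    rcases lt_or_eq_of_le (Finset.sum_nonneg fun k _ => hanneg k) with h | h
    · exact h
    have hall : ∀ k ∈ Finset.univ, a k = 0 :=
      (Finset.sum_eq_zero_iff_of_nonneg fun k _ => hanneg k).mp h.symm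
    have hφ0 : ∀ y, φ y = 0 := by
      intro y
      rw [hφ_eval]
      exact Finset.sum_eq_zero fun k hk => by rw [hall k hk, mul_zero]
    have h1 : (0:ℝ) < u := by
      have := hφD _ (hconstD (μ - 1) (by linarith))
      rwa [hφ0] at this
    have h2 : u ≤ 0 := by
      have := hφC _ hy₀C
      rwa [hφ0] at this
    linarith
  have hsu : s * μ ≤ u := by
    by_contra h
    push_neg at h
    set ε : ℝ := (s * μ - u) / (2 * s) with hε
    have hεpos : 0 < ε := div_pos (by linarith) (by linarith)
    have hlt := hφD _ (hconstD (μ - ε) (by linarith))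
    rw [hφ_eval] at hlt
    have heq : ∑ k, (μ - ε) * a k = (μ - ε) * s := by
      rw [hs, Finset.mul_sum]
    rw [heq] at hlt
    have hεs : ε * s = (s * μ - u) / 2 := by
      rw [hε, div_mul_eq_mul_div, div_eq_div_iff (by linarith) (by norm_num : (2:ℝ) ≠ 0)]
      ring
    nlinarith [hlt, hεs]
  -- the optimal multipliers
  refine ⟨fun k => a k / s, fun k => div_nonneg (hanneg k) hspos.le, ?_, ?_, weak⟩
  · rw [← Finset.sum_div, ← hs, div_self hspos.ne']
  refine le_antisymm (weak _ (fun k => div_nonneg (hanneg k) hspos.le)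
    (by rw [← Finset.sum_div, ← hs, div_self hspos.ne'])) ?_
  rw [hMμ]
  refine le_iInf fun x => ?_
  by_cases hxt : ∀ k, f k x ≠ ⊤
  · set r : Fin n → ℝ := fun k => (f k x).toReal with hr
    have hrk : ∀ k, f k x = ((r k : ℝ) : EReal) := fun k =>
      (EReal.coe_toReal (hxt k) (hnb k x)).symm
    have hrC : r ∈ C := ⟨x, fun k => (hrk k).le⟩
    have hφr := hφC r hrC
    rw [hφ_eval] at hφr
    have hsum : ∑ k, smul0 (a k / s) (f k x) = ((∑ k, a k / s * r k : ℝ) : EReal) := by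
      rw [ereal_coe_sum]
      exact Finset.sum_congr rfl fun k _ => by rw [hrk k, smul0_coe]
    rw [hsum]
    apply EReal.coe_le_coe_iff.mpr
    have heq : ∑ k, a k / s * r k = (∑ k, r k * a k) / s := by
      rw [Finset.sum_div]
      exact Finset.sum_congr rfl fun k _ => by ring
    rw [heq]
    rw [le_div_iff₀ hspos]
    nlinarith
  · push_neg at hxt
    obtain ⟨k₀, hk₀⟩ := hxt
    have : ∑ k, smul0 (a k / s) (f k x) = ⊤ := by
      refine ereal_sum_eq_top _ _ (fun k _ => smul0_ne_bot _
        (div_nonneg (hanneg k) hspos.le) _ (hnb k x)) k₀ (Finset.mem_univ k₀) ?_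
      rw [hk₀]
      exact smul0_top _ (div_nonneg (hanneg k₀) hspos.le)
    rw [this]
    exact le_top
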